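/- arXiv:1806.09543 — 2 statements merged into one kernel-verified Lean document; each statement's English description precedes it below -/
import Mathlib

section
/- Let X be an abelian group and F : X → X an endomorphism (of abelian groups) such that F^k − 1 is injective for every integer k ≥ 1. Fix m ≥ 1 and let Tr_m = id + F + F^2 + ... + F^{m−1}. Then Tr_m descends to a well-defined map from X/(F−1)X to X/(F^m−1)X, and this induced map is a bijection from X/(F−1)X onto the set of F-fixed points of X/(F^m−1)X (where F acts on the quotient since F commutes with F^m−1). -/
/-- The trace map `Tr_m = 1 + F + ... + F^{m-1}` descends to a bijection from
`X/(F-1)X` onto the `F`-fixed points of `X/(F^m-1)X`. -/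
theorem stmt0 (X : Type*) [AddCommGroup X] (F : Module.End ℤ X)
    (hinj : ∀ k : ℕ, 1 ≤ k → Function.Injective ⇑(F ^ k - (1 : Module.End ℤ X)))
    (m : ℕ) (hm : 1 ≤ m) :
    ∃ g : (X ⧸ LinearMap.range (F - 1)) →ₗ[ℤ] (X ⧸ LinearMap.range (F ^ m - 1)),
      (∀ x : X, g (Submodule.Quotient.mk x) =
          Submodule.Quotient.mk ((∑ i ∈ Finset.range m, F ^ i) x)) ∧
      Function.Injective g ∧
      Set.range g = {c : X ⧸ LinearMap.range (F ^ m - 1) |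
        ∃ x : X, Submodule.Quotient.mk x = c ∧ Submodule.Quotient.mk (F x) = c} := by
  set T : Module.End ℤ X := ∑ i ∈ Finset.range m, F ^ i with hT
  have hTmul : T * (F - 1) = F ^ m - 1 := geom_sum_mul F m
  have hmulT : (F - 1) * T = F ^ m - 1 := mul_geom_sum F m
  set π := Submodule.mkQ (LinearMap.range (F ^ m - 1)) with hπ
  have hTinj : Function.Injective ⇑T := by
    intro a b h
    apply hinj m hm
    have h2 : ((F - 1) * T) a = ((F - 1) * T) b := by
      simp only [Module.End.mul_apply, h]
    rwa [hmulT] at h2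
  have hker : LinearMap.range (F - 1) ≤ LinearMap.ker (π ∘ₗ T) := by
    rintro _ ⟨y, rfl⟩
    simp only [LinearMap.mem_ker, LinearMap.comp_apply]
    have h1 : T ((F - 1) y) = (F ^ m - 1) y := by
      rw [← Module.End.mul_apply, hTmul]
    rw [h1, hπ]
    exact (Submodule.Quotient.mk_eq_zero _).2 (LinearMap.mem_range_self (F ^ m - 1) y)
  refine ⟨Submodule.liftQ _ (π ∘ₗ T) hker, fun x => ?_, ?_, ?_⟩
  · simp [π]
  · rw [← LinearMap.ker_eq_bot, Submodule.ker_liftQ, Submodule.eq_bot_iff]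
    rintro _ ⟨x, hx, rfl⟩
    simp only [LinearMap.mem_ker, LinearMap.comp_apply, hπ, Submodule.mkQ_apply] at hx
    obtain ⟨y, hy⟩ := (Submodule.Quotient.mk_eq_zero _).1 hx
    have : T ((F - 1) y) = T x := by
      rw [← Module.End.mul_apply, hTmul, hy]
    have hx' : x = (F - 1) y := (hTinj this).symm
    simp only [Submodule.mkQ_apply, Submodule.Quotient.mk_eq_zero]
    exact ⟨y, hx'.symm⟩
  · ext c
    constructor
    · rintro ⟨q, rfl⟩
      obtain ⟨x, rfl⟩ := Submodule.mkQ_surjective _ q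
      refine ⟨T x, by simp [π], ?_⟩
      have : (F - 1) (T x) ∈ LinearMap.range (F ^ m - 1) := by
        rw [← Module.End.mul_apply, hmulT]; exact ⟨x, rfl⟩
      have h2 : Submodule.Quotient.mk (p := LinearMap.range (F ^ m - 1)) ((F - 1) (T x)) = 0 :=
        (Submodule.Quotient.mk_eq_zero _).2 this
      have h3 : (Submodule.Quotient.mk (F (T x)) : X ⧸ LinearMap.range (F ^ m - 1)) =
          Submodule.Quotient.mk (T x) := by
        have := h2
        rw [show (F - 1) (T x) = F (T x) - T x by simp [LinearMap.sub_apply]] at this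
        rw [Submodule.Quotient.mk_sub, sub_eq_zero] at this
        exact this
      simpa [π] using h3
    · rintro ⟨x, rfl, hfx⟩
      have h1 : (F - 1) x ∈ LinearMap.range (F ^ m - 1) := by
        have : (Submodule.Quotient.mk ((F - 1) x) : X ⧸ LinearMap.range (F ^ m - 1)) = 0 := by
          rw [show (F - 1) x = F x - x by simp [LinearMap.sub_apply],
            Submodule.Quotient.mk_sub, sub_eq_zero]
          exact hfx
        exact (Submodule.Quotient.mk_eq_zero _).1 this
      obtain ⟨y, hy⟩ := h1
      have hy' : (F - 1) (T y) = (F - 1) x := by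
        rw [← Module.End.mul_apply, hmulT, hy]
      have hx : x = T y := (hinj 1 le_rfl (by simpa using hy')).symm
      exact ⟨Submodule.Quotient.mk y, by simp [π, hx]⟩
end

section
/- Let p be a prime, Y a finitely generated free abelian group, and D the subgroup of ℚ/ℤ consisting of elements of order prime to p (the prime-to-p torsion of ℚ/ℤ). Let φ : Y → Y be an injective group endomorphism whose cokernel Y/φ(Y) is finite of order prime to p. Then the induced map φ ⊗ id : Y ⊗ D → Y ⊗ D is surjective, and its kernel is isomorphic (as an abelian group) to Y/φ(Y). -/
open TensorProduct

namespace Stmt17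

abbrev R : Type := ℚ ⧸ AddSubgroup.zmultiples (1 : ℚ)

noncomputable def e (m : ℕ) : R := QuotientAddGroup.mk (1 / (m : ℚ))

lemma nsmul_e (m : ℕ) : m • e m = 0 := by
  rcases Nat.eq_zero_or_pos m with h | h
  · subst h; simp
  · have : (m • (1 / (m : ℚ))) ∈ AddSubgroup.zmultiples (1 : ℚ) := by
      refine ⟨1, ?_⟩
      have hm : (m : ℚ) ≠ 0 := by exact_mod_cast h.ne'
      show (1:ℤ) • (1:ℚ) = m • (1 / (m : ℚ))
      rw [one_smul, nsmul_eq_mul, mul_one_div, div_self hm]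
    rw [e, ← QuotientAddGroup.mk_nsmul]
    exact (QuotientAddGroup.eq_zero_iff _).mpr this

lemma orderOf_e_dvd (m : ℕ) : addOrderOf (e m) ∣ m :=
  addOrderOf_dvd_of_nsmul_eq_zero (nsmul_e m)

lemma e_mul (a b : ℕ) (ha : a ≠ 0) (hb : b ≠ 0) : b • e (a * b) = e a := by
  have ha' : (a : ℚ) ≠ 0 := by exact_mod_cast ha
  have hb' : (b : ℚ) ≠ 0 := by exact_mod_cast hb
  have : (b : ℕ) • (1 / ((a * b : ℕ) : ℚ)) = 1 / (a : ℚ) := by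
    push_cast
    rw [nsmul_eq_mul]
    field_simp
  rw [e, e, ← QuotientAddGroup.mk_nsmul, this]

lemma dvd_of_zsmul_e (m : ℕ) (hm : m ≠ 0) (c : ℤ) (h : c • e m = 0) : (m : ℤ) ∣ c := by
  rw [e, ← QuotientAddGroup.mk_zsmul] at h
  obtain ⟨k, hk⟩ := (QuotientAddGroup.eq_zero_iff _).mp h
  refine ⟨k, ?_⟩
  rw [mul_comm]
  have hm' : (m : ℚ) ≠ 0 := by exact_mod_cast hm
  have : (k : ℚ) = c * (1 / m) := by
    simpa using hk
  have : (c : ℚ) = k * m := by field_simp at this; linarith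
  exact_mod_cast this

lemma exists_of_tmul_eq_zero (Y : Type) [AddCommGroup Y] [Module.Free ℤ Y]
    (m : ℕ) (hm : m ≠ 0) (y : Y) (h : y ⊗ₜ[ℤ] e m = (0 : Y ⊗[ℤ] R)) :
    ∃ w, y = (m : ℤ) • w := by
  classical
  set b := Module.Free.chooseBasis ℤ Y with hb
  set E : Y ⊗[ℤ] R ≃ₗ[ℤ] (Module.Free.ChooseBasisIndex ℤ Y →₀ R) :=
    (TensorProduct.congr b.repr (LinearEquiv.refl ℤ R)).trans
      (TensorProduct.finsuppScalarLeft ℤ R _) with hE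
  have hcoord : ∀ i, (b.repr y i) • e m = 0 := by
    intro i
    have h0 := congrArg (fun t => E t i) h
    simp only [map_zero] at h0
    erw [LinearEquiv.trans_apply] at h0
    simpa [TensorProduct.congr_tmul,
      TensorProduct.finsuppScalarLeft_apply_tmul_apply] using h0
  have hdvd : ∀ i, (m : ℤ) ∣ b.repr y i := fun i => dvd_of_zsmul_e m hm _ (hcoord i)
  refine ⟨b.repr.symm ((b.repr y).mapRange (· / (m : ℤ)) (by simp)), ?_⟩
  apply b.repr.injective
  rw [map_smul, LinearEquiv.apply_symm_apply]
  ext i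
  simp only [Finsupp.smul_apply, Finsupp.mapRange_apply, smul_eq_mul]
  exact (Int.mul_ediv_cancel' (hdvd i)).symm

end Stmt17

/-- Let `D ⊆ ℚ/ℤ` be the subgroup of elements of order prime to `p`, and let
`φ : Y → Y` be an injective endomorphism of a finitely generated free abelian
group with finite cokernel of order prime to `p`. Then `φ ⊗ id : Y ⊗ D → Y ⊗ D`
is surjective with kernel isomorphic to `Y/φ(Y)`. -/
theorem stmt17 (p : ℕ) (hp : p.Prime)
    (Y : Type) [AddCommGroup Y] [Module.Free ℤ Y] [Module.Finite ℤ Y]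
    (D : AddSubgroup (ℚ ⧸ AddSubgroup.zmultiples (1 : ℚ)))
    (hD : ∀ x, x ∈ D ↔ Nat.Coprime (addOrderOf x) p)
    (φ : Y →ₗ[ℤ] Y) (hinj : Function.Injective φ)
    (hfin : Finite (Y ⧸ LinearMap.range φ))
    (hord : ¬ p ∣ Nat.card (Y ⧸ LinearMap.range φ)) :
    Function.Surjective (LinearMap.rTensor (↥D) φ) ∧
    Nonempty ((LinearMap.ker (LinearMap.rTensor (↥D) φ)) ≃+ (Y ⧸ LinearMap.range φ)) := by
  classical
  open Stmt17 in
  set n := Nat.card (Y ⧸ LinearMap.range φ) with hn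
  have hn0 : n ≠ 0 := Nat.card_ne_zero.mpr ⟨⟨0⟩, hfin⟩
  have hncop : Nat.Coprime n p := ((hp.coprime_iff_not_dvd).mpr hord).symm
  -- membership in D of e m for m coprime to p
  have hmemD : ∀ m : ℕ, Nat.Coprime m p → e m ∈ D := by
    intro m hc
    exact (hD _).mpr (Nat.Coprime.coprime_dvd_left (orderOf_e_dvd m) hc)
  -- n • y lands in range φ
  have hnmem : ∀ y : Y, (n : ℤ) • y ∈ LinearMap.range φ := by
    intro y
    have h1 : n • (Submodule.Quotient.mk y : Y ⧸ LinearMap.range φ) = 0 := by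
      have := addOrderOf_dvd_natCard (Submodule.Quotient.mk y : Y ⧸ LinearMap.range φ)
      exact addOrderOf_dvd_iff_nsmul_eq_zero.mp this
    have : Submodule.Quotient.mk ((n : ℤ) • y) = (0 : Y ⧸ LinearMap.range φ) := by
      rw [Submodule.Quotient.mk_smul, natCast_zsmul] at *
      exact h1
    exact (Submodule.Quotient.mk_eq_zero _).mp this
  choose ψ hψ using fun y => hnmem y
  have hψ_eq : ∀ (y x : Y), φ x = (n : ℤ) • y → ψ y = x := by
    intro y x hx
    exact hinj (by rw [hψ, hx])
  -- representation lemma: every tensor is y ⊗ (1/m)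
  have hrep : ∀ t : Y ⊗[ℤ] (↥D), ∃ (y : Y) (m : ℕ) (d : ↥D), m ≠ 0 ∧ Nat.Coprime m p ∧
      (d : R) = e m ∧ t = y ⊗ₜ[ℤ] d := by
    intro t
    induction t using TensorProduct.induction_on with
    | zero =>
      exact ⟨0, 1, ⟨e 1, hmemD 1 (Nat.coprime_one_left p)⟩, one_ne_zero,
        Nat.coprime_one_left p, rfl, (TensorProduct.zero_tmul _ _).symm⟩
    | tmul y d =>
      set m := addOrderOf ((d : R)) with hm
      have hcop : Nat.Coprime m p := (hD _).mp d.2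
      have hm0 : m ≠ 0 := by
        intro h0
        rw [h0] at hcop
        exact hp.one_lt.ne' (Nat.coprime_zero_left p |>.mp hcop)
      obtain ⟨q, hq⟩ := QuotientAddGroup.mk_surjective ((d : R))
      have hms : m • (d : R) = 0 := addOrderOf_nsmul_eq_zero _
      have : (QuotientAddGroup.mk (m • q) : R) = 0 := by
        rw [QuotientAddGroup.mk_nsmul, hq]; exact hms
      obtain ⟨k, hk⟩ := (QuotientAddGroup.eq_zero_iff _).mp this
      have hm' : (m : ℚ) ≠ 0 := by exact_mod_cast hm0
      have hqval : q = (k : ℚ) * (1 / m) := by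
        have : (k : ℚ) = m • q := by simpa using hk
        rw [nsmul_eq_mul] at this
        field_simp at this ⊢
        linarith
      have hdR : (d : R) = k • e m := by
        rw [← hq, hqval, e, ← QuotientAddGroup.mk_zsmul]
        norm_num
      have hdd : d = k • (⟨e m, hmemD m hcop⟩ : ↥D) := by
        apply Subtype.ext
        simpa using hdR
      refine ⟨k • y, m, ⟨e m, hmemD m hcop⟩, hm0, hcop, rfl, ?_⟩
      rw [hdd]
      exact (TensorProduct.smul_tmul k y _).symm
    | add t1 t2 ih1 ih2 =>
      obtain ⟨y1, m1, d1, hm1, hc1, hd1, ht1⟩ := ih1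
      obtain ⟨y2, m2, d2, hm2, hc2, hd2, ht2⟩ := ih2
      have hmm : m1 * m2 ≠ 0 := mul_ne_zero hm1 hm2
      have hccop : Nat.Coprime (m1 * m2) p := Nat.Coprime.mul hc1 hc2
      set dm : ↥D := ⟨e (m1 * m2), hmemD _ hccop⟩ with hdm
      have h1 : d1 = (m2 : ℤ) • dm := by
        apply Subtype.ext
        push_cast [hdm]
        rw [hd1, ← e_mul m1 m2 hm1 hm2]
        simp [natCast_zsmul]
      have h2 : d2 = (m1 : ℤ) • dm := by
        apply Subtype.ext
        push_cast [hdm]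
        rw [hd2, ← e_mul m2 m1 hm2 hm1, mul_comm m2 m1]
        simp [natCast_zsmul]
      refine ⟨(m2 : ℤ) • y1 + (m1 : ℤ) • y2, m1 * m2, dm, hmm, hccop, rfl, ?_⟩
      rw [ht1, ht2, h1, h2, TensorProduct.add_tmul]
      rw [TensorProduct.smul_tmul, TensorProduct.smul_tmul]
  -- vanishing lemma specialized to D
  have hzero : ∀ (y : Y) (m : ℕ), m ≠ 0 → ∀ d : ↥D, (d : R) = e m →
      y ⊗ₜ[ℤ] d = (0 : Y ⊗[ℤ] ↥D) → ∃ w, y = (m : ℤ) • w := by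
    intro y m hm d hd h
    have h2 : y ⊗ₜ[ℤ] (e m) = (0 : Y ⊗[ℤ] R) := by
      have := congrArg (LinearMap.lTensor Y (D.subtype.toIntLinearMap)) h
      simpa [LinearMap.lTensor_tmul, hd] using this
    exact exists_of_tmul_eq_zero Y m hm y h2
  -- the element 1/n in D
  set dn : ↥D := ⟨e n, hmemD n hncop⟩ with hdn
  have hdn0 : (n : ℤ) • dn = 0 := by
    apply Subtype.ext
    push_cast [hdn]
    rw [natCast_zsmul]
    exact nsmul_e n
  constructor
  · -- surjectivity
    intro t
    obtain ⟨y, m, d, hm0, hc, hd, ht⟩ := hrep t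
    have hnm : n * m ≠ 0 := mul_ne_zero hn0 hm0
    have hnmc : Nat.Coprime (n * m) p := Nat.Coprime.mul hncop hc
    refine ⟨ψ y ⊗ₜ[ℤ] ⟨e (n * m), hmemD _ hnmc⟩, ?_⟩
    rw [LinearMap.rTensor_tmul, hψ y, ht]
    have hd' : d = (n : ℤ) • (⟨e (n * m), hmemD _ hnmc⟩ : ↥D) := by
      apply Subtype.ext
      push_cast
      rw [hd, mul_comm n m, ← e_mul m n hm0 hn0]
      simp [natCast_zsmul]
    rw [hd', TensorProduct.smul_tmul]
  · -- kernel iso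
    -- the map θ : Y → Y ⊗ D, y ↦ ψ y ⊗ (1/n)
    have hψadd : ∀ a b : Y, ψ (a + b) = ψ a + ψ b := by
      intro a b
      apply hψ_eq
      rw [map_add, hψ, hψ, smul_add]
    set θ₀ : Y →+ Y ⊗[ℤ] ↥D :=
      AddMonoidHom.mk' (fun y => ψ y ⊗ₜ[ℤ] dn) (by
        intro a b
        simp only [hψadd a b, TensorProduct.add_tmul]) with hθ₀
    set θ : Y →ₗ[ℤ] Y ⊗[ℤ] ↥D := θ₀.toIntLinearMap with hθ
    have hθapp : ∀ y, θ y = ψ y ⊗ₜ[ℤ] dn := fun y => rfl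
    have hθker : ∀ y, θ y ∈ LinearMap.ker (LinearMap.rTensor (↥D) φ) := by
      intro y
      rw [LinearMap.mem_ker, hθapp, LinearMap.rTensor_tmul, hψ,
        TensorProduct.smul_tmul, hdn0, TensorProduct.tmul_zero]
    set θ' : Y →ₗ[ℤ] ↥(LinearMap.ker (LinearMap.rTensor (↥D) φ)) :=
      LinearMap.codRestrict _ θ hθker with hθ'
    have hrange : LinearMap.range φ ≤ LinearMap.ker θ' := by
      rintro _ ⟨x, rfl⟩
      apply Subtype.ext
      have hx : ψ (φ x) = (n : ℤ) • x := hψ_eq _ _ (by rw [map_smul])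
      show θ (φ x) = 0
      rw [hθapp, hx, TensorProduct.smul_tmul, hdn0, TensorProduct.tmul_zero]
    set F := Submodule.liftQ (LinearMap.range φ) θ' hrange with hF
    have hFmk : ∀ x : Y, ((F (Submodule.Quotient.mk x) : ↥(LinearMap.ker _)) : Y ⊗[ℤ] ↥D)
        = ψ x ⊗ₜ[ℤ] dn := fun x => rfl
    have hFinj : Function.Injective F := by
      rw [← LinearMap.ker_eq_bot]
      rw [Submodule.ker_liftQ_eq_bot]
      intro x hx
      rw [LinearMap.mem_ker] at hx
      have hx' : ψ x ⊗ₜ[ℤ] dn = (0 : Y ⊗[ℤ] ↥D) := by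
        have h1 := congrArg (Subtype.val) hx
        exact h1
      obtain ⟨w, hw⟩ := hzero (ψ x) n hn0 dn rfl hx'
      have : φ ((n : ℤ) • w) = (n : ℤ) • x := by rw [← hw, hψ]
      rw [map_smul] at this
      have hfw : φ w = x := by
        have hnz : (n : ℤ) ≠ 0 := by exact_mod_cast hn0
        exact smul_right_injective Y hnz this
      exact ⟨w, hfw⟩
    have hFsurj : Function.Surjective F := by
      rintro ⟨t, htk⟩
      obtain ⟨y, m, d, hm0, hc, hd, ht⟩ := hrep t
      rw [LinearMap.mem_ker, ht, LinearMap.rTensor_tmul] at htk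
      obtain ⟨w, hw⟩ := hzero (φ y) m hm0 d hd htk
      refine ⟨Submodule.Quotient.mk w, ?_⟩
      apply Subtype.ext
      rw [hFmk]
      show _ = t
      rw [ht]
      -- ψ w ⊗ (1/n) = y ⊗ (1/m)
      have hnm : n * m ≠ 0 := mul_ne_zero hn0 hm0
      have hnmc : Nat.Coprime (n * m) p := Nat.Coprime.mul hncop hc
      set dnm : ↥D := ⟨e (n * m), hmemD _ hnmc⟩ with hdnm
      have h1 : dn = (m : ℤ) • dnm := by
        apply Subtype.ext
        push_cast [hdn, hdnm]
        rw [← e_mul n m hn0 hm0]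
        simp [natCast_zsmul]
      have h2 : d = (n : ℤ) • dnm := by
        apply Subtype.ext
        push_cast [hdnm]
        rw [hd, mul_comm n m, ← e_mul m n hm0 hn0]
        simp [natCast_zsmul]
      have hkey : (m : ℤ) • ψ w = (n : ℤ) • y := by
        apply hinj
        rw [map_smul, map_smul, hψ, hw]
        rw [smul_comm]
      rw [h1, h2, ← TensorProduct.smul_tmul, ← TensorProduct.smul_tmul, hkey]
    exact ⟨((LinearEquiv.ofBijective F ⟨hFinj, hFsurj⟩).symm).toAddEquiv⟩
end
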